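/- The birational map ĝ:(x:y:z) ⇢ (xz : xy : yz) of ℙ² has order 6 (as a birational transformation), and its unique fixed point in ℙ² is (1:1:1). -/

import Mathlib

set_option synthInstance.maxHeartbeats 1000000
set_option maxHeartbeats 1000000


noncomputable section

/-- The function field `ℂ(x,y)` of the plane. -/
abbrev Kfield := FractionRing (MvPolynomial (Fin 2) ℂ)

/-- The inclusion of polynomials into `ℂ(x,y)`. -/
def ι : MvPolynomial (Fin 2) ℂ →+* Kfield := algebraMap _ _

/-- The first affine coordinate `x`. -/
def Xv : Kfield := ι (MvPolynomial.X 0)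

/-- The second affine coordinate `y`. -/
def Yv : Kfield := ι (MvPolynomial.X 1)

lemma iinj : Function.Injective ι := IsFractionRing.injective _ _

lemma hX0 : Xv ≠ 0 := fun h =>
  MvPolynomial.X_ne_zero (R := ℂ) (0 : Fin 2) (iinj (by simpa [map_zero, Xv] using h))

lemma hY0 : Yv ≠ 0 := fun h =>
  MvPolynomial.X_ne_zero (R := ℂ) (1 : Fin 2) (iinj (by simpa [map_zero, Yv] using h))

lemma fix_id (τ : RingAut Kfield)
    (hc : ∀ c : ℂ, τ (ι (MvPolynomial.C c)) = ι (MvPolynomial.C c))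
    (hX : τ Xv = Xv) (hY : τ Yv = Yv) : τ = 1 := by
  have hpoly : ∀ p : MvPolynomial (Fin 2) ℂ, τ (ι p) = ι p := by
    intro p
    induction p using MvPolynomial.induction_on with
    | C c => exact hc c
    | add p q hp hq => rw [map_add ι, map_add τ, hp, hq]
    | mul_X p i hp =>
      fin_cases i
      · rw [map_mul ι, map_mul τ, hp]; congr 1
      · rw [map_mul ι, map_mul τ, hp]; congr 1
  ext a
  obtain ⟨p, q, hq, rfl⟩ := IsFractionRing.div_surjective (A := MvPolynomial (Fin 2) ℂ) a
  show τ (ι p / ι q) = ι p / ι q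
  rw [map_div₀, hpoly, hpoly]

/-- The birational map `ĝ : (x:y:z) ⇢ (xz : xy : yz)` of `ℙ²` — which in the affine chart
`z = 1` corresponds to the `ℂ`-automorphism `σ : x ↦ x/y, y ↦ x` of `ℂ(x,y)` — has order `6`,
and its unique fixed point in `ℙ²` (outside the base locus) is `(1:1:1)`. -/
theorem stmt_11 (σ : RingAut Kfield)
    (hc : ∀ c : ℂ, σ (ι (MvPolynomial.C c)) = ι (MvPolynomial.C c))
    (hx : σ Xv = Xv / Yv) (hy : σ Yv = Xv) :
    orderOf σ = 6 ∧
    ∀ v : Fin 3 → ℂ, v ≠ 0 →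
      (![v 0 * v 2, v 0 * v 1, v 1 * v 2] : Fin 3 → ℂ) ≠ 0 →
      ((∃ c : ℂ, c ≠ 0 ∧ (![v 0 * v 2, v 0 * v 1, v 1 * v 2] : Fin 3 → ℂ) = c • v) ↔
        ∃ c : ℂ, c ≠ 0 ∧ v = c • ![1, 1, 1]) := by
  constructor
  · have h2x : σ (σ Xv) = 1 / Yv := by
      rw [hx, map_div₀, hx, hy]
      rw [div_right_comm, div_self hX0]
    have h2y : σ (σ Yv) = Xv / Yv := by rw [hy, hx]
    have h3x : (σ^3) Xv = 1 / Xv := by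
      show σ (σ (σ Xv)) = 1 / Xv
      rw [h2x, map_div₀, map_one, hy]
    have h3y : (σ^3) Yv = 1 / Yv := by
      show σ (σ (σ Yv)) = 1 / Yv
      rw [h2y, map_div₀, hx, hy]
      rw [div_right_comm, div_self hX0]
    have h4x : (σ^4) Xv = Yv / Xv := by
      show σ ((σ^3) Xv) = Yv / Xv
      rw [h3x, map_div₀, map_one, hx, one_div_div]
    have h4y : (σ^4) Yv = 1 / Xv := by
      show σ ((σ^3) Yv) = 1 / Xv
      rw [h3y, map_div₀, map_one, hy]
    have h5x : (σ^5) Xv = Yv := by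
      show σ ((σ^4) Xv) = Yv
      rw [h4x, map_div₀, hx, hy]
      rw [div_div_cancel₀ hX0]
    have h5y : (σ^5) Yv = Yv / Xv := by
      show σ ((σ^4) Yv) = Yv / Xv
      rw [h4y, map_div₀, map_one, hx, one_div_div]
    have h6x : (σ^6) Xv = Xv := by
      show σ ((σ^5) Xv) = Xv
      rw [h5x, hy]
    have h6y : (σ^6) Yv = Yv := by
      show σ ((σ^5) Yv) = Yv
      rw [h5y, map_div₀, hx, hy]
      rw [div_div_cancel₀ hX0]
    have hcn : ∀ n : ℕ, ∀ c : ℂ, (σ^n) (ι (MvPolynomial.C c)) = ι (MvPolynomial.C c) := by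
      intro n
      induction n with
      | zero => intro c; rfl
      | succ n ih =>
        intro c
        show (σ^n) (σ (ι (MvPolynomial.C c))) = _
        rw [hc, ih]
    have h6 : σ ^ 6 = 1 := fix_id _ (hcn 6) h6x h6y
    have key : ∀ a b : MvPolynomial (Fin 2) ℂ,
        MvPolynomial.eval (![2, 3] : Fin 2 → ℂ) a ≠ MvPolynomial.eval ![2, 3] b → ι a ≠ ι b := by
      intro a b hab h
      exact hab (congrArg _ (iinj h))
    rw [orderOf_eq_iff (by norm_num)]
    refine ⟨h6, ?_⟩
    intro m hm hm0 h1
    interval_cases m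
    · have hfix : (σ^1) Xv = Xv := by rw [h1]; rfl
      have : Xv / Yv = Xv := by rw [← hx]; rw [pow_one] at hfix; exact hfix
      rw [div_eq_iff hY0] at this
      exact key (MvPolynomial.X 0) (MvPolynomial.X 0 * MvPolynomial.X 1)
        (by simp <;> norm_num) (by simpa [Xv, Yv, map_mul] using this)
    · have hfix : (σ^2) Xv = Xv := by rw [h1]; rfl
      have : (1 : Kfield) / Yv = Xv := by
        rw [← h2x]; exact hfix
      rw [div_eq_iff hY0] at this
      exact key 1 (MvPolynomial.X 0 * MvPolynomial.X 1)
        (by simp <;> norm_num) (by simpa [Xv, Yv, map_mul, map_one] using this)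
    · have hfix : (σ^3) Xv = Xv := by rw [h1]; rfl
      have : (1 : Kfield) / Xv = Xv := by rw [← h3x]; exact hfix
      rw [div_eq_iff hX0] at this
      exact key 1 (MvPolynomial.X 0 * MvPolynomial.X 0)
        (by simp <;> norm_num) (by simpa [Xv, map_mul, map_one] using this)
    · have hfix : (σ^4) Xv = Xv := by rw [h1]; rfl
      have : Yv / Xv = Xv := by rw [← h4x]; exact hfix
      rw [div_eq_iff hX0] at this
      exact key (MvPolynomial.X 1) (MvPolynomial.X 0 * MvPolynomial.X 0)
        (by simp <;> norm_num) (by simpa [Xv, Yv, map_mul] using this)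
    · have hfix : (σ^5) Xv = Xv := by rw [h1]; rfl
      have : Yv = Xv := by rw [← h5x]; exact hfix
      exact key (MvPolynomial.X 1) (MvPolynomial.X 0)
        (by simp <;> norm_num) (by simpa [Xv, Yv] using this)
  · intro v hv himg
    constructor
    · rintro ⟨k, hk, heq⟩
      have e0 : v 0 * v 2 = k * v 0 := by simpa using congrFun heq 0
      have e1 : v 0 * v 1 = k * v 1 := by simpa using congrFun heq 1
      have e2 : v 1 * v 2 = k * v 2 := by simpa using congrFun heq 2
      have hv0 : v 0 ≠ 0 := by
        intro h0
        have hb : v 1 = 0 := by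
          have h := e1; rw [h0, zero_mul] at h
          exact (mul_eq_zero.mp h.symm).resolve_left hk
        have hc2 : v 2 = 0 := by
          have h := e2; rw [hb, zero_mul] at h
          exact (mul_eq_zero.mp h.symm).resolve_left hk
        apply hv
        funext i; fin_cases i <;> assumption
      have hv2 : v 2 = k := by
        apply mul_left_cancel₀ hv0
        rw [e0, mul_comm]
      have hv1 : v 1 ≠ 0 → v 1 = k := by
        intro hb
        have hv0k : v 0 = k := mul_right_cancel₀ hb e1
        have h := e2
        rw [hv2] at h
        exact mul_right_cancel₀ hk h
      have hb : v 1 ≠ 0 := by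
        intro hb0
        have h : k * v 2 = 0 := by rw [← e2, hb0, zero_mul]
        rcases mul_eq_zero.mp h with h' | h'
        · exact hk h'
        · rw [hv2] at h'; exact hk h'
      have hv1' := hv1 hb
      have hv0k : v 0 = k := mul_right_cancel₀ hb e1
      refine ⟨k, hk, ?_⟩
      funext i; fin_cases i <;> simp [hv0k, hv1', hv2]
    · rintro ⟨k, hk, rfl⟩
      refine ⟨k, hk, ?_⟩
      funext i; fin_cases i <;> simp <;> ring

end
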